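/- For all integers k and l, the class of t^k d(t^l u) in Ω_R/dR equals μ_{k,l} ω₁. -/

import Mathlib

noncomputable section

set_option synthInstance.maxHeartbeats 1000000
set_option maxHeartbeats 1000000

open Polynomial

/-- The polynomial `u² - (t² + 4t)` over the Laurent polynomial ring `ℂ[t,t⁻¹]`. -/
def threePoly : Polynomial (LaurentPolynomial ℂ) :=
  Polynomial.X ^ 2 - Polynomial.C (LaurentPolynomial.T 2 + 4 * LaurentPolynomial.T 1)

/-- The three-point ring `R = ℂ[t, t⁻¹, u | u² = t² + 4t]`, i.e. the quotient of
`ℂ[t,t⁻¹][u]` by the ideal generated by `u² - t² - 4t`. -/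
abbrev R3 : Type := AdjoinRoot threePoly

/-- `t^k` in `R3`, for `k : ℤ`. -/
def tp (k : ℤ) : R3 := AdjoinRoot.of threePoly (LaurentPolynomial.T k)

/-- the element `t` of `R`. -/
def tR : R3 := tp 1

/-- the element `t⁻¹` of `R`. -/
def tInv : R3 := tp (-1)

/-- the element `u` of `R`. -/
def uR : R3 := AdjoinRoot.root threePoly

abbrev ΩR : Type := KaehlerDifferential ℂ R3

/-- the universal derivation `d : R → Ω_R`. -/
def DR : Derivation ℂ R3 ΩR := KaehlerDifferential.D ℂ R3

/-- the `ℂ`-subspace `dR ⊆ Ω_R` of exact differentials. -/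
def dRsub : Submodule ℂ ΩR := LinearMap.range (DR.toLinearMap)

/-- the quotient `Ω_R/dR`. -/
abbrev ΩRq : Type := ΩR ⧸ dRsub

/-- the class of an element of `Ω_R` in `Ω_R/dR`. -/
def clsR (x : ΩR) : ΩRq := Submodule.Quotient.mk (p := dRsub) x

/-- `ω₀`, the class of `t⁻¹ dt`. -/
def ω0 : ΩRq := clsR (tInv • DR tR)

/-- `ω₁`, the class of `t⁻¹u dt`. -/
def ω1 : ΩRq := clsR ((tInv * uR) • DR tR)

/-- The extended double factorial, as a complex number: `n!!` for `n ≥ 0`, with the conventions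
`(-1)!! = 1` and `(-3)!! = -1`. -/
def dfac (n : ℤ) : ℂ :=
  if n = -1 then 1 else if n = -3 then -1 else (Nat.doubleFactorial n.toNat : ℂ)

/-- `μ_{k,l} = 0` for `k + l ≤ -2`, and
`μ_{k,l} = k·(-1)^{k+l+1}·2^{k+l}·(2(k+l)-1)!!/(k+l+1)!` for `k + l ≥ -1`. -/
def μ (k l : ℤ) : ℂ :=
  if k + l ≤ -2 then 0
  else (k : ℂ) * (-1 : ℂ) ^ (k + l + 1) * (2 : ℂ) ^ (k + l) * dfac (2 * (k + l) - 1) /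
    (Nat.factorial (k + l + 1).toNat : ℂ)

lemma tp_mul (a b : ℤ) : tp a * tp b = tp (a + b) := by
  rw [tp, tp, tp, ← map_mul, ← LaurentPolynomial.T_add]

lemma tp_zero : tp 0 = 1 := by
  rw [tp, LaurentPolynomial.T_zero, map_one]

lemma u_sq : uR ^ 2 = tp 2 + 4 * tp 1 := by
  have h : AdjoinRoot.mk threePoly (Polynomial.X ^ 2
      - Polynomial.C (LaurentPolynomial.T 2 + 4 * LaurentPolynomial.T 1)) = 0 :=
    AdjoinRoot.mk_self (f := threePoly)
  rw [map_sub, map_pow, AdjoinRoot.mk_X, AdjoinRoot.mk_C, sub_eq_zero] at h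
  rw [uR, h, tp, tp, map_add, map_mul, map_ofNat]

lemma tp_smul_smul (a b : ℤ) (x : ΩR) : tp a • tp b • x = tp (a+b) • x := by
  rw [smul_smul, tp_mul]

lemma Dtp (n : ℤ) : DR (tp n) = ((n : ℤ) : R3) • (tp (n-1) • DR tR) := by
  induction n using Int.induction_on with
  | zero => simp [tp_zero]
  | succ i ih =>
      have h : tp ((i:ℤ)+1) = tp i * tR := by rw [tR, tp_mul]
      rw [h, Derivation.leibniz, ih, smul_smul, smul_smul, smul_smul, ← add_smul]
      congr 1
      rw [show tR * ((i:ℤ):R3) * tp ((i:ℤ)-1) = ((i:ℤ):R3) * (tp 1 * tp ((i:ℤ)-1)) by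
        rw [tR]; ring, tp_mul, show ((1:ℤ) + ((i:ℤ)-1)) = (i:ℤ) by ring,
        show ((i:ℤ)+1-1 : ℤ) = (i:ℤ) by ring]
      push_cast
      ring
  | pred i ih =>
      have h : tp (-(i:ℤ)) = tp (-(i:ℤ)-1) * tR := by rw [tR, tp_mul]; ring_nf
      have h3 := congrArg (fun y => DR y) h
      simp only [Derivation.leibniz] at h3
      have h4 : tR • DR (tp (-(i:ℤ)-1)) = DR (tp (-(i:ℤ))) - tp (-(i:ℤ)-1) • DR tR := by
        rw [h3]; abel
      have h5 := congrArg (fun y => tp (-1) • y) h4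
      simp only [smul_sub, smul_smul, tR, tp_mul] at h5
      rw [show ((-1:ℤ) + 1) = (0:ℤ) by ring, tp_zero, one_smul] at h5
      rw [show tp 1 = tR from rfl] at h5
      rw [h5, ih,
        show ((-1:ℤ) + (-(i:ℤ) - 1)) = (-(i:ℤ)-2) by ring,
        show (-(i:ℤ)-1-1 : ℤ) = (-(i:ℤ)-2) by ring,
        smul_smul, smul_smul, smul_smul, ← sub_smul]
      congr 1
      rw [show tp (-1) * (((-(i:ℤ)):ℤ):R3) * tp (-(i:ℤ)-1)
          = (((-(i:ℤ)):ℤ):R3) * (tp (-1) * tp (-(i:ℤ)-1)) by ring,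
        tp_mul, show ((-1:ℤ) + (-(i:ℤ)-1)) = (-(i:ℤ)-2) by ring]
      push_cast
      ring

lemma clsR_add (x y : ΩR) : clsR (x + y) = clsR x + clsR y := rfl
lemma clsR_smul (c : ℂ) (x : ΩR) : clsR (c • x) = c • clsR x := rfl
lemma clsD (f : R3) : clsR (DR f) = 0 := by
  rw [clsR, Submodule.Quotient.mk_eq_zero]
  exact ⟨f, rfl⟩

lemma intCast_smul' (m : ℤ) (x : ΩR) : ((m : ℤ) : R3) • x = (m : ℂ) • x := by
  rw [← map_intCast (algebraMap ℂ R3) m, algebraMap_smul]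

lemma udu : uR • DR uR = (tR + 2) • DR tR := by
  have h := congrArg (fun y => DR y) u_sq
  simp only [pow_two, Derivation.leibniz, map_add] at h
  rw [show (4:R3) = ((4:ℕ):R3) by norm_num] at h
  rw [Derivation.map_natCast, smul_zero, add_zero] at h
  rw [show tp (2:ℤ) = tp 1 * tp 1 from (tp_mul 1 1).symm, Derivation.leibniz] at h
  have key2 : (2:ℂ) • (uR • DR uR) = (2:ℂ) • ((tR + 2) • DR tR) := by
    rw [two_smul, two_smul, h, tR]
    module
  exact smul_right_injective ΩR (two_ne_zero) key2

lemma u2du : (tp 2 + 4 * tp 1) • DR uR = ((tR + 2) * uR) • DR tR := by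
  have h := congrArg (fun y => uR • y) udu
  simp only [smul_smul] at h
  rw [← pow_two, u_sq] at h
  rw [h]
  ring_nf

lemma Duexp (a : ℤ) :
    DR (tp a * uR) = tp a • DR uR + (a : ℂ) • ((tp (a-1) * uR) • DR tR) := by
  rw [Derivation.leibniz, Dtp, smul_smul, smul_smul, ← intCast_smul']
  congr 1
  rw [smul_smul]
  congr 1
  ring

def η (m : ℤ) : ΩRq := clsR ((tp m * uR) • DR tR)

lemma clsDu (m : ℤ) : clsR (tp m • DR uR) = (-(m:ℂ)) • η (m-1) := by
  have h := clsD (tp m * uR)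
  rw [Duexp, clsR_add, clsR_smul] at h
  rw [show clsR ((tp (m-1) * uR) • DR tR) = η (m-1) from rfl] at h
  rw [eq_neg_of_add_eq_zero_left h, ← neg_smul]

lemma lemA (k l : ℤ) : clsR (tp k • DR (tp l * uR)) = (-(k:ℂ)) • η (k+l-1) := by
  rw [Duexp, smul_add, tp_smul_smul, smul_comm, smul_smul]
  rw [show tp k * (tp (l-1) * uR) = tp (k+l-1) * uR by
    rw [← mul_assoc, tp_mul, show k+(l-1) = k+l-1 by ring]]
  rw [clsR_add, clsR_smul, clsDu]
  rw [show clsR ((tp (k+l-1) * uR) • DR tR) = η (k+l-1) from rfl]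
  rw [← add_smul]
  congr 1
  push_cast
  ring

lemma e4 (x : R3) : (4 : R3) * x = (4:ℂ) • x := by
  rw [show (4:R3) = algebraMap ℂ R3 4 from (map_ofNat _ 4).symm, ← Algebra.smul_def]

lemma lemB (n : ℤ) : ((n:ℂ)+3) • η (n+1) + (4*(n:ℂ)+6) • η n = 0 := by
  have key : DR ((tp (n+2) + 4 * tp (n+1)) * uR)
      = ((n:ℂ)+3) • ((tp (n+1) * uR) • DR tR) + (4*(n:ℂ)+6) • ((tp n * uR) • DR tR) := by
    rw [Derivation.leibniz]
    have hg : tp (n+2) + 4 * tp (n+1) = tp n * (tp 2 + 4 * tp 1) := by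
      rw [mul_add, tp_mul, mul_left_comm, tp_mul]
    rw [show (tp (n+2) + 4 * tp (n+1)) • DR uR = tp n • (((tR + 2) * uR) • DR tR) by
      rw [hg, ← smul_smul, u2du]]
    rw [map_add, e4 (tp (n+1)), Derivation.map_smul, Dtp, Dtp]
    rw [intCast_smul', intCast_smul']
    rw [show tp ((n:ℤ)+2-1) = tp n * tR by rw [tR, tp_mul]; congr 1; ring,
        show tp ((n:ℤ)+1-1) = tp n by congr 1; ring,
        show tp ((n:ℤ)+1) = tp n * tR by rw [tR, tp_mul]]
    match_scalars <;> (simp only [map_ofNat]; push_cast; ring)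
  have h := clsD ((tp (n+2) + 4 * tp (n+1)) * uR)
  rw [key, clsR_add, clsR_smul, clsR_smul] at h
  rw [show clsR ((tp (n+1) * uR) • DR tR) = η (n+1) from rfl,
      show clsR ((tp n * uR) • DR tR) = η n from rfl] at h
  exact h

lemma solve_smul {a b : ℂ} {x y : ΩRq} (ha : a ≠ 0) (h : a • x + b • y = 0) :
    x = (-b/a) • y := by
  have h2 : a • x = (-b) • y := by
    rw [neg_smul]; exact eq_neg_of_add_eq_zero_left h
  calc x = a⁻¹ • (a • x) := (inv_smul_smul₀ ha x).symm
    _ = a⁻¹ • ((-b) • y) := by rw [h2]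
    _ = (-b/a) • y := by rw [smul_smul, div_eq_inv_mul]

lemma eta_neg3 : η (-3) = 0 := by
  have h := lemB (-3)
  norm_num at h
  exact h

lemma eta_low : ∀ j : ℕ, η (-3 - (j:ℤ)) = 0 := by
  intro j
  induction j with
  | zero => simpa using eta_neg3
  | succ i ih =>
      have h := lemB (-4 - (i:ℤ))
      rw [show (-4 - (i:ℤ) + 1) = -3 - (i:ℤ) by ring, ih, smul_zero, zero_add] at h
      rw [show (-3 - ((i+1:ℕ):ℤ)) = -4 - (i:ℤ) by push_cast; ring]
      have hne : (4 * (((-4 - (i:ℤ)):ℤ):ℂ) + 6) ≠ 0 := by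
        have h0 : ((4 * (-4 - (i:ℤ)) + 6 : ℤ) : ℂ) ≠ 0 := Int.cast_ne_zero.mpr (by omega)
        intro hz
        apply h0
        push_cast at hz ⊢
        linear_combination hz
      rcases smul_eq_zero.mp h with hc | hx
      · exact absurd hc hne
      · exact hx

lemma eta_le {n : ℤ} (hn : n ≤ -3) : η n = 0 := by
  have h := eta_low (-3 - n).toNat
  rw [Int.toNat_of_nonneg (by omega)] at h
  rw [show (-3 - (-3 - n)) = n by ring] at h
  exact h

def eC : ℕ → ℂ
  | 0 => 1/2
  | (j+1) => (-(4*(j:ℂ)-2)/((j:ℂ)+1)) * eC j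

lemma eta_e : ∀ j : ℕ, η ((j:ℤ) - 2) = eC j • ω1 := by
  intro j
  have hω : ω1 = η (-1) := rfl
  induction j with
  | zero =>
      have h := lemB (-2)
      rw [add_comm] at h
      have ha : (4 * (((-2:ℤ)):ℂ) + 6) ≠ 0 := by push_cast; norm_num
      have h2 := solve_smul ha h
      rw [show ((-2:ℤ)+1) = (-1:ℤ) by ring] at h2
      rw [show (((0:ℕ)):ℤ) - 2 = (-2:ℤ) by norm_num, hω, h2]
      congr 1
      rw [eC]
      push_cast
      norm_num
  | succ i ih =>
      have h := lemB ((i:ℤ)-2)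
      have ha : (((((i:ℤ)-2):ℤ):ℂ) + 3) ≠ 0 := by
        intro hz
        apply Nat.cast_add_one_ne_zero (R := ℂ) i
        push_cast at hz
        linear_combination hz
      have h2 := solve_smul ha h
      rw [show ((i:ℤ)-2+1) = (i:ℤ)-1 by ring] at h2
      rw [show (((i+1:ℕ)):ℤ) - 2 = (i:ℤ)-1 by push_cast; ring, h2, ih, smul_smul]
      congr 1
      rw [eC]
      have hb : ((i:ℂ) + 1) ≠ 0 := Nat.cast_add_one_ne_zero i
      push_cast
      rw [show ((i:ℂ)-2+3) = (i:ℂ)+1 by ring]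
      rw [div_mul_eq_mul_div, div_mul_eq_mul_div, div_eq_div_iff hb hb]
      ring

lemma dfac_nat (n : ℕ) : dfac (n:ℤ) = (Nat.doubleFactorial n : ℂ) := by
  rw [dfac, if_neg (by omega), if_neg (by omega), Int.toNat_natCast]

lemma dfac_step (j : ℕ) : dfac (2*(j:ℤ)-1) = ((2*(j:ℤ)-1 : ℤ):ℂ) * dfac (2*(j:ℤ)-3) := by
  rcases j with _ | _ | m
  · norm_num [dfac]
  · norm_num [dfac, Nat.doubleFactorial]
  · rw [show (2*(((m+2:ℕ)):ℤ)-1) = ((2*m+3:ℕ):ℤ) by push_cast; ring,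
       show (2*(((m+2:ℕ)):ℤ)-3) = ((2*m+1:ℕ):ℤ) by push_cast; ring,
       dfac_nat, dfac_nat,
       show 2*m+3 = (2*m+1)+2 by ring, Nat.doubleFactorial_add_two]
    push_cast
    ring

lemma e_closed : ∀ j : ℕ,
    eC j = (-1:ℂ)^(j+1) * 2^((j:ℤ)-1) * dfac (2*(j:ℤ)-3) / (Nat.factorial j : ℂ) := by
  intro j
  induction j with
  | zero =>
      rw [eC]
      norm_num [dfac]
  | succ j ih =>
      rw [eC, ih]
      rw [show (((j+1:ℕ)):ℤ) = (j:ℤ)+1 by push_cast; ring]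
      rw [show (2*((j:ℤ)+1)-3) = 2*(j:ℤ)-1 by ring, dfac_step]
      rw [show ((j:ℤ)+1-1) = ((j:ℤ)-1) + 1 by ring, zpow_add_one₀ (by norm_num : (2:ℂ) ≠ 0)]
      rw [Nat.factorial_succ]
      have hb : ((j:ℂ) + 1) ≠ 0 := Nat.cast_add_one_ne_zero j
      have hf : (Nat.factorial j : ℂ) ≠ 0 := Nat.cast_ne_zero.mpr (Nat.factorial_ne_zero j)
      push_cast
      field_simp
      ring

/-- For all integers `k` and `l`, the class of `t^k d(t^l u)` in `Ω_R/dR` equals `μ_{k,l} ω₁`. -/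
theorem stmt_11 (k l : ℤ) :
    clsR (tp k • DR (tp l * uR)) = μ k l • ω1 := by
  rw [lemA]
  by_cases hc : k + l ≤ -2
  · rw [eta_le (by omega : k + l - 1 ≤ -3), smul_zero, μ, if_pos hc, zero_smul]
  · have hge : (0:ℤ) ≤ k + l + 1 := by omega
    have hj : (((k+l+1).toNat : ℕ):ℤ) = k+l+1 := Int.toNat_of_nonneg hge
    set j := (k+l+1).toNat with hjdef
    rw [show (k+l-1 : ℤ) = (j:ℤ)-2 by omega]
    rw [eta_e, smul_smul]
    congr 1
    rw [μ, if_neg hc, e_closed, ← hjdef]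
    rw [show (2*(k+l)-1 : ℤ) = 2*(j:ℤ)-3 by omega,
        show (k+l+1 : ℤ) = (j:ℤ) by omega,
        show (k+l : ℤ) = (j:ℤ)-1 by omega]
    rw [zpow_natCast]
    ring

end
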